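/- arXiv:1508.02688 — 2 statements merged into one kernel-verified Lean document; each statement's English description precedes it below -/
import Mathlib

section
/- For every integer d ≥ 2, every odd integer k ≥ 3, and all constants c_1, c_2, c_3 > 0, there exists a constant C > 0 such that for every power q of an odd prime, every (c_1,c_2,c_3)-regular set V ⊆ F_q^d, and every E ⊆ V with |E| > q^{(d−1)/2}, one has Λ_{k−1}(E) Λ_{k+1}(E) ≤ C ( q^{(d−1)(k−2)} |E|^2 + q^{((d−1)(k−3)−2)/2} |E|^{k+1} + q^{−2} |E|^{2k−2} ). -/
open Finset

/-- `‖x‖ = x₁² + ⋯ + x_d²` for `x ∈ 𝔽_q^d`. -/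
def normF {F : Type*} [Field F] {d : ℕ} (x : Fin d → F) : F := ∑ i, x i ^ 2

/-- The `k`-resultant set `Δ_k(E) = {‖x¹ - x² - ⋯ - x^k‖ : xⁱ ∈ E}` (for `k ≥ 2`):
`y` plays the role of `x¹` and `x 0, …, x (k-2)` play the roles of `x², …, x^k`. -/
def Delta {F : Type*} [Field F] {d : ℕ} (k : ℕ) (E : Set (Fin d → F)) : Set F :=
  {t | ∃ (y : Fin d → F) (x : Fin (k - 1) → Fin d → F),
    y ∈ E ∧ (∀ i, x i ∈ E) ∧ normF (y - ∑ i, x i) = t}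

/-- The `2m`-energy `Λ_{2m}(E)`: the number of `2m`-tuples of points of `E`
whose first `m` entries and last `m` entries have equal sums. -/
noncomputable def energy {F : Type*} [Field F] {d : ℕ} (m : ℕ) (E : Set (Fin d → F)) : ℕ :=
  Nat.card {p : (Fin m → Fin d → F) × (Fin m → Fin d → F) //
    (∀ i, p.1 i ∈ E) ∧ (∀ i, p.2 i ∈ E) ∧ (∑ i, p.1 i) = ∑ i, p.2 i}

/-- The (normalized) Fourier transform of the indicator function of `E ⊆ 𝔽_q^d`,
with respect to the additive character `χ`. -/
noncomputable def ftF {F : Type*} [Field F] [Fintype F] {d : ℕ} (χ : AddChar F ℂ)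
    (E : Set (Fin d → F)) (m : Fin d → F) : ℂ :=
  ((Fintype.card F : ℂ) ^ d)⁻¹ *
    ∑ x : Fin d → F, Set.indicator E (fun y => χ (-(∑ i, m i * y i))) x

/-- `V ⊆ 𝔽_q^d` is `(c₁,c₂,c₃)`-regular (with respect to the character `χ`). -/
def IsRegularVariety {F : Type*} [Field F] [Fintype F] {d : ℕ} (c1 c2 c3 : ℝ) (χ : AddChar F ℂ)
    (V : Set (Fin d → F)) : Prop :=
  c1 * (Fintype.card F : ℝ) ^ (d - 1) ≤ (Nat.card V : ℝ) ∧
  (Nat.card V : ℝ) ≤ c2 * (Fintype.card F : ℝ) ^ (d - 1) ∧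
  ∀ m : Fin d → F, m ≠ 0 →
    ‖ftF χ V m‖ ≤ c3 * (Fintype.card F : ℝ) ^ (-(((d : ℝ) + 1) / 2))

/-- `V ⊆ 𝔽_q²` is a `(c₁,c₂,c₃)`-nondegenerate regular curve defined by a nonzero
polynomial of total degree at most `n` (with respect to the character `χ`). -/
def IsNondegCurve {F : Type*} [Field F] [Fintype F] (c1 c2 c3 : ℝ) (χ : AddChar F ℂ)
    (n : ℕ) (V : Set (Fin 2 → F)) : Prop :=
  (∃ Q : MvPolynomial (Fin 2) F, Q ≠ 0 ∧ Q.totalDegree ≤ n ∧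
      (¬∃ A B : MvPolynomial (Fin 2) F, A.totalDegree = 1 ∧ Q = A * B) ∧
      V = {x | MvPolynomial.eval x Q = 0}) ∧
  c1 * (Fintype.card F : ℝ) ≤ (Nat.card V : ℝ) ∧
  (Nat.card V : ℝ) ≤ c2 * (Fintype.card F : ℝ) ∧
  ∀ m : Fin 2 → F, m ≠ 0 →
    ‖ftF χ V m‖ ≤ c3 * (Fintype.card F : ℝ) ^ (-(3 / 2) : ℝ)

open scoped Classical

set_option linter.unusedSectionVars false
set_option linter.unusedVariables false
set_option maxHeartbeats 1000000

namespace Stmt14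

variable {F : Type} [Field F] [Fintype F] {d : ℕ}

def dott (ξ x : Fin d → F) : F := ∑ i, ξ i * x i

lemma dott_sum (ξ : Fin d → F) {ι : Type*} (s : Finset ι) (g : ι → Fin d → F) :
    dott ξ (∑ i ∈ s, g i) = ∑ i ∈ s, dott ξ (g i) := by
  simp only [dott, Finset.sum_apply, Finset.mul_sum]
  exact Finset.sum_comm

lemma dott_sub (ξ x y : Fin d → F) : dott ξ (x - y) = dott ξ x - dott ξ y := by
  simp [dott, mul_sub, Finset.sum_sub_distrib, Pi.sub_apply]

lemma map_sum' (χ : AddChar F ℂ) {ι : Type*} (s : Finset ι) (f : ι → F) :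
    χ (∑ i ∈ s, f i) = ∏ i ∈ s, χ (f i) := by
  induction s using Finset.induction_on with
  | empty => simp
  | insert _ _ h ih => rw [Finset.sum_insert h, Finset.prod_insert h, AddChar.map_add_eq_mul, ih]

lemma chi_neg (χ : AddChar F ℂ) (a : F) : χ (-a) = (starRingEnd ℂ) (χ a) := by
  rw [AddChar.map_neg_eq_inv, Complex.inv_eq_conj (AddChar.norm_apply χ a)]

lemma sum_chi (χ : AddChar F ℂ) (hχ : χ ≠ 1) (a : Fin d → F) :
    ∑ ξ : Fin d → F, χ (dott ξ a) = if a = 0 then ((Fintype.card F : ℂ) ^ d) else 0 := by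
  have prim : χ.IsPrimitive := AddChar.IsPrimitive.of_ne_one hχ
  have h1 : ∑ ξ : Fin d → F, χ (dott ξ a) = ∏ i : Fin d, ∑ t : F, χ (t * a i) := by
    rw [Finset.prod_univ_sum (fun _ => (univ : Finset F)) (fun i t => χ (t * a i))]
    rw [Fintype.piFinset_univ]
    exact Finset.sum_congr rfl fun ξ _ => map_sum' χ univ fun i => ξ i * a i
  rw [h1]
  by_cases h : a = 0
  · subst h
    rw [if_pos rfl]
    have h2 : ∀ i : Fin d, ∑ t : F, χ (t * (0 : Fin d → F) i) = (Fintype.card F : ℂ) := by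
      intro i; simp [Finset.card_univ]
    rw [Finset.prod_congr rfl fun i _ => h2 i, Finset.prod_const, Finset.card_univ,
      Fintype.card_fin]
  · rw [if_neg h]
    obtain ⟨i, hi⟩ : ∃ i, a i ≠ 0 := by
      by_contra hc; push_neg at hc; exact h (funext hc)
    refine Finset.prod_eq_zero (Finset.mem_univ i) ?_
    have h3 := AddChar.sum_mulShift (ψ := χ) (a i) prim
    rw [h3, if_neg hi]; simp

noncomputable def SS (χ : AddChar F ℂ) (s : Finset (Fin d → F)) (ξ : Fin d → F) : ℂ :=
  ∑ x ∈ s, χ (dott ξ x)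

noncomputable def SB (χ : AddChar F ℂ) (s : Finset (Fin d → F)) (ξ : Fin d → F) : ℂ :=
  ∑ x ∈ s, χ (- dott ξ x)

lemma SB_eq_conj (χ : AddChar F ℂ) (s : Finset (Fin d → F)) (ξ : Fin d → F) :
    SB χ s ξ = (starRingEnd ℂ) (SS χ s ξ) := by
  simp only [SS, SB, map_sum, chi_neg]

lemma norm_SB (χ : AddChar F ℂ) (s : Finset (Fin d → F)) (ξ : Fin d → F) :
    ‖SB χ s ξ‖ = ‖SS χ s ξ‖ := by
  rw [SB_eq_conj]; exact RCLike.norm_conj _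

lemma SS_zero (χ : AddChar F ℂ) (s : Finset (Fin d → F)) :
    SS χ s 0 = (s.card : ℂ) := by
  simp [SS, dott]

lemma SB_zero (χ : AddChar F ℂ) (s : Finset (Fin d → F)) :
    SB χ s 0 = (s.card : ℂ) := by
  simp [SB, dott]

lemma master (χ : AddChar F ℂ) (hχ : χ ≠ 1) {m n : ℕ}
    (A : Fin m → Finset (Fin d → F)) (B : Fin n → Finset (Fin d → F)) :
    ((Fintype.card F : ℂ) ^ d) *
      (((((Fintype.piFinset A) ×ˢ (Fintype.piFinset B)).filter
          (fun p => (∑ i, p.1 i) = ∑ j, p.2 j)).card : ℕ) : ℂ)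
      = ∑ ξ : Fin d → F, (∏ i, SS χ (A i) ξ) * ∏ j, SB χ (B j) ξ := by
  have hterm : ∀ ξ : Fin d → F, (∏ i, SS χ (A i) ξ) * ∏ j, SB χ (B j) ξ
      = ∑ p ∈ (Fintype.piFinset A) ×ˢ (Fintype.piFinset B),
          χ (dott ξ ((∑ i, p.1 i) - ∑ j, p.2 j)) := by
    intro ξ
    simp only [SS, SB]
    rw [Finset.prod_univ_sum, Finset.prod_univ_sum, Finset.sum_mul_sum, Finset.sum_product]
    refine Finset.sum_congr rfl fun g _ => Finset.sum_congr rfl fun h _ => ?_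
    rw [← map_sum' χ, ← map_sum' χ, ← AddChar.map_add_eq_mul]
    congr 1
    rw [dott_sub, dott_sum, dott_sum, sub_eq_add_neg, Finset.sum_neg_distrib]
  symm
  calc ∑ ξ : Fin d → F, (∏ i, SS χ (A i) ξ) * ∏ j, SB χ (B j) ξ
      = ∑ p ∈ (Fintype.piFinset A) ×ˢ (Fintype.piFinset B), ∑ ξ : Fin d → F,
          χ (dott ξ ((∑ i, p.1 i) - ∑ j, p.2 j)) := by
        rw [Finset.sum_congr rfl fun ξ _ => hterm ξ]; exact Finset.sum_comm
    _ = ∑ p ∈ (Fintype.piFinset A) ×ˢ (Fintype.piFinset B),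
          (if (∑ i, p.1 i) = ∑ j, p.2 j then ((Fintype.card F : ℂ) ^ d) else 0) := by
        refine Finset.sum_congr rfl fun p _ => ?_
        rw [sum_chi χ hχ]
        simp [sub_eq_zero]
    _ = _ := by
        rw [Finset.sum_ite, Finset.sum_const, Finset.sum_const_zero, add_zero, nsmul_eq_mul,
          mul_comm]


lemma energy_card (m : ℕ) (E : Set (Fin d → F)) :
    energy m E = (((Fintype.piFinset (fun _ : Fin m => E.toFinset)) ×ˢ
        (Fintype.piFinset (fun _ : Fin m => E.toFinset))).filter
        (fun p => (∑ i, p.1 i) = ∑ j, p.2 j)).card := by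
  rw [energy, Nat.card_eq_fintype_card, Fintype.card_subtype]
  congr 1
  ext p
  simp [Fintype.mem_piFinset, Set.mem_toFinset, and_assoc]

lemma energy_identity (χ : AddChar F ℂ) (hχ : χ ≠ 1) (m : ℕ) (E : Set (Fin d → F)) :
    ((Fintype.card F : ℝ) ^ d) * (energy m E : ℝ)
      = ∑ ξ : Fin d → F, ‖SS χ E.toFinset ξ‖ ^ (2 * m) := by
  have h := master χ hχ (fun _ : Fin m => E.toFinset) (fun _ : Fin m => E.toFinset)
  rw [← energy_card] at h
  have h2 : ∀ ξ : Fin d → F, (∏ _i : Fin m, SS χ E.toFinset ξ) * ∏ _j : Fin m, SB χ E.toFinset ξ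
      = ((‖SS χ E.toFinset ξ‖ ^ (2 * m) : ℝ) : ℂ) := by
    intro ξ
    rw [Finset.prod_const, Finset.prod_const, Finset.card_univ, Fintype.card_fin,
      SB_eq_conj, ← mul_pow, Complex.mul_conj']
    push_cast
    ring
  rw [Finset.sum_congr rfl fun ξ _ => h2 ξ] at h
  have h3 : ((Fintype.card F : ℂ) ^ d) * ((energy m E : ℕ) : ℂ)
      = ((∑ ξ : Fin d → F, ‖SS χ E.toFinset ξ‖ ^ (2*m) : ℝ) : ℂ) := by
    rw [h]; push_cast; ring
  exact_mod_cast h3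

lemma SB_V (χ : AddChar F ℂ) (V : Set (Fin d → F)) (ξ : Fin d → F) :
    SB χ V.toFinset ξ = ((Fintype.card F : ℂ) ^ d) * ftF χ V ξ := by
  have hne : ((Fintype.card F : ℂ) ^ d) ≠ 0 :=
    pow_ne_zero _ (Nat.cast_ne_zero.mpr Fintype.card_ne_zero)
  rw [ftF, ← mul_assoc, mul_inv_cancel₀ hne, one_mul]
  rw [SB, ← Set.filter_mem_univ_eq_toFinset V, Finset.sum_filter]
  refine Finset.sum_congr rfl fun x _ => ?_
  rw [Set.indicator_apply]
  by_cases hx : x ∈ V <;> simp [hx, dott]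

lemma card_toFinset_eq (E : Set (Fin d → F)) : E.toFinset.card = Nat.card E := by
  rw [Set.toFinset_card, Nat.card_eq_fintype_card]

lemma mixed_le (χ : AddChar F ℂ) (hχ : χ ≠ 1) (m : ℕ) (E V : Set (Fin d → F)) (hEV : E ⊆ V) :
    ((Fintype.card F : ℝ) ^ d) * (energy (m+1) E : ℝ)
      ≤ (Nat.card E : ℝ) ^ (2*m+1) * (Nat.card V : ℝ)
        + ∑ ξ ∈ univ.erase (0 : Fin d → F),
            ‖SS χ E.toFinset ξ‖ ^ (2*m+1) * ‖SB χ V.toFinset ξ‖ := by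
  set Ef := E.toFinset with hEf
  set Vf := V.toFinset with hVf
  set Bf : Fin (m+1) → Finset (Fin d → F) := Fin.snoc (fun _ : Fin m => Ef) Vf with hBf
  set cnt := (((Fintype.piFinset (fun _ : Fin (m+1) => Ef)) ×ˢ (Fintype.piFinset Bf)).filter
      (fun p => (∑ i, p.1 i) = ∑ j, p.2 j)).card with hcnt
  have step1 : energy (m+1) E ≤ cnt := by
    rw [energy_card]
    apply Finset.card_le_card
    apply Finset.filter_subset_filter
    apply Finset.product_subset_product (Finset.Subset.refl _)
    apply Fintype.piFinset_subset
    intro j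
    refine Fin.lastCases ?_ ?_ j
    · rw [hBf]
      simp only [Fin.snoc_last]
      exact Set.toFinset_subset_toFinset.mpr hEV
    · intro i
      rw [hBf]
      simp [Fin.snoc_castSucc, hEf]
  have step2 : ((Fintype.card F : ℂ) ^ d) * (cnt : ℂ)
      = ∑ ξ : Fin d → F, (SS χ Ef ξ) ^ (m+1) * ((SB χ Ef ξ) ^ m * SB χ Vf ξ) := by
    rw [hcnt, master χ hχ]
    refine Finset.sum_congr rfl fun ξ _ => ?_
    rw [Finset.prod_const, Finset.card_univ, Fintype.card_fin, Fin.prod_univ_castSucc]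
    simp only [hBf, Fin.snoc_castSucc, Fin.snoc_last, Finset.prod_const, Finset.card_univ,
      Fintype.card_fin]
  have step3 : ((Fintype.card F : ℝ) ^ d) * (cnt : ℝ)
      ≤ (Nat.card E : ℝ)^(2*m+1) * (Nat.card V : ℝ)
        + ∑ ξ ∈ univ.erase (0 : Fin d → F), ‖SS χ Ef ξ‖^(2*m+1) * ‖SB χ Vf ξ‖ := by
    have e1 : ((Fintype.card F : ℝ) ^ d) * (cnt : ℝ) = ‖((Fintype.card F : ℂ) ^ d) * (cnt : ℂ)‖ := by
      rw [norm_mul, norm_pow, Complex.norm_natCast, Complex.norm_natCast]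
    rw [e1, step2]
    refine le_trans (norm_sum_le _ _) ?_
    rw [← Finset.sum_erase_add _ _ (Finset.mem_univ (0 : Fin d → F))]
    rw [add_comm]
    refine add_le_add ?_ (Finset.sum_le_sum fun ξ _ => ?_)
    · rw [SS_zero, SB_zero, SB_zero, card_toFinset_eq, card_toFinset_eq]
      simp only [norm_mul, norm_pow, Complex.norm_natCast]
      refine le_of_eq ?_
      ring
    · simp only [norm_mul, norm_pow, norm_SB]
      refine le_of_eq ?_
      ring
  calc ((Fintype.card F : ℝ) ^ d) * (energy (m+1) E : ℝ)
      ≤ ((Fintype.card F : ℝ) ^ d) * (cnt : ℝ) := by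
        have : ((energy (m+1) E : ℕ) : ℝ) ≤ (cnt : ℝ) := by exact_mod_cast step1
        have hq : (0:ℝ) ≤ (Fintype.card F : ℝ) ^ d := by positivity
        exact mul_le_mul_of_nonneg_left this hq
    _ ≤ _ := step3


lemma quad {x a b : ℝ} (hx : 0 ≤ x) (ha : 0 ≤ a) (hb : 0 ≤ b)
    (h : x ≤ a + b * Real.sqrt x) : x ≤ 2*a + 4*b^2 := by
  nlinarith [Real.sq_sqrt hx, Real.sqrt_nonneg x, sq_nonneg (Real.sqrt x - 2*b)]

lemma key_energy (hd : 1 ≤ d) (χ : AddChar F ℂ) (hχ : χ ≠ 1) (c2 c3 : ℝ)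
    (hc2 : 0 < c2) (hc3 : 0 < c3)
    (V E : Set (Fin d → F)) (hEV : E ⊆ V)
    (hV2 : (Nat.card V : ℝ) ≤ c2 * (Fintype.card F : ℝ) ^ (d - 1))
    (hV3 : ∀ ξ : Fin d → F, ξ ≠ 0 →
      ‖ftF χ V ξ‖ ≤ c3 * (Fintype.card F : ℝ) ^ (-(((d : ℝ) + 1) / 2)))
    (hN : (Fintype.card F : ℝ) ^ (d - 1) ≤ (Nat.card E : ℝ) ^ 2) :
    ∀ m : ℕ, 1 ≤ m → (energy m E : ℝ) ≤ (1 + 2*c2 + 8*c3^2)^m *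
      ((Nat.card E : ℝ) ^ (2*m - 1) / (Fintype.card F : ℝ)
        + (Fintype.card F : ℝ) ^ ((d-1)*(m-1)) * (Nat.card E : ℝ)) := by
  set q' := (Fintype.card F : ℝ) with hq'
  set N := (Nat.card E : ℝ) with hNdef
  set B := 1 + 2*c2 + 8*c3^2 with hBdef
  have hq0 : (0:ℝ) < q' := by
    rw [hq']; exact_mod_cast Fintype.card_pos
  have hq'ne : q' ≠ 0 := ne_of_gt hq0
  have hqd1ne : q'^(d-1) ≠ 0 := by positivity
  have hN0 : (0:ℝ) ≤ N := by rw [hNdef]; positivity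
  have hB1 : (1:ℝ) ≤ B := by rw [hBdef]; nlinarith
  have hqd : q'^d = q'^(d-1) * q' := by
    conv_lhs => rw [show d = (d-1)+1 by omega]
    rw [pow_succ]
  intro m hm
  induction m, hm using Nat.le_induction with
  | base =>
    have h1 : energy 1 E ≤ Nat.card E := by
      rw [energy]
      refine Nat.card_le_card_of_injective
        (fun p => (⟨p.1.1 0, p.2.1 0⟩ : E)) ?_
      intro p q hpq
      have h0 : p.1.1 0 = q.1.1 0 := congrArg Subtype.val hpq
      have hp2 : p.1.2 0 = p.1.1 0 := by
        have h := p.2.2.2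
        rw [Fin.sum_univ_one, Fin.sum_univ_one] at h
        exact h.symm
      have hq2 : q.1.2 0 = q.1.1 0 := by
        have h := q.2.2.2
        rw [Fin.sum_univ_one, Fin.sum_univ_one] at h
        exact h.symm
      apply Subtype.ext
      apply Prod.ext
      · funext i
        rw [Subsingleton.elim i 0]
        exact h0
      · funext i
        rw [Subsingleton.elim i 0, hp2, hq2]
        exact h0
    have h2 : (energy 1 E : ℝ) ≤ N := by rw [hNdef]; exact_mod_cast h1
    norm_num
    have h3 : (0:ℝ) ≤ N / q' := by positivity
    nlinarith
  | succ m hm ih =>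
    set u : (Fin d → F) → ℝ := fun ξ => ‖SS χ E.toFinset ξ‖ with hu
    set Λm := (energy m E : ℝ) with hΛm
    set Λm1 := (energy (m+1) E : ℝ) with hΛm1
    have hΛm0 : 0 ≤ Λm := by rw [hΛm]; positivity
    have hΛm10 : 0 ≤ Λm1 := by rw [hΛm1]; positivity
    have hidm : q'^d * Λm = ∑ ξ : Fin d → F, u ξ ^ (2*m) := energy_identity χ hχ m E
    have hidm1 : q'^d * Λm1 = ∑ ξ : Fin d → F, u ξ ^ (2*(m+1)) := energy_identity χ hχ (m+1) E
    have hmix := mixed_le χ hχ m E V hEV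
    set R3 := c3 * Real.sqrt (q' ^ (d-1)) with hR3
    have hR3nn : 0 ≤ R3 := by rw [hR3]; positivity
    have e1 : ((d - 1 : ℕ) : ℝ) = (d : ℝ) - 1 := by
      rw [Nat.cast_sub hd, Nat.cast_one]
    have hSBV : ∀ ξ : Fin d → F, ξ ≠ 0 → ‖SB χ V.toFinset ξ‖ ≤ R3 := by
      intro ξ hξ
      rw [SB_V, norm_mul, norm_pow, Complex.norm_natCast]
      have h1 : ‖ftF χ V ξ‖ ≤ c3 * q' ^ (-(((d : ℝ) + 1) / 2)) := by
        exact hV3 ξ hξ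
      have hbig : q'^d * q' ^ (-(((d:ℝ)+1)/2)) = Real.sqrt (q' ^ (d-1)) := by
        rw [Real.sqrt_eq_rpow, ← Real.rpow_natCast q' (d-1), ← Real.rpow_mul hq0.le,
          ← Real.rpow_natCast q' d, ← Real.rpow_add hq0, e1]
        congr 1
        ring
      calc q'^d * ‖ftF χ V ξ‖ ≤ q'^d * (c3 * q' ^ (-(((d : ℝ) + 1) / 2))) := by
            apply mul_le_mul_of_nonneg_left h1 (by positivity)
        _ = R3 := by rw [hR3, ← hbig]; ring
    have hR3sq : R3^2 = c3^2 * q'^(d-1) := by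
      rw [hR3, mul_pow, Real.sq_sqrt (by positivity)]
    -- Cauchy-Schwarz
    have hCS : ∑ ξ ∈ univ.erase (0 : Fin d → F), u ξ ^ (2*m+1)
        ≤ Real.sqrt (q'^d * Λm) * Real.sqrt (q'^d * Λm1) := by
      have h1 : (∑ ξ ∈ univ.erase (0:Fin d → F), u ξ ^ (2*m+1))^2
          ≤ (∑ ξ ∈ univ.erase (0:Fin d → F), u ξ ^ (2*m))
            * (∑ ξ ∈ univ.erase (0:Fin d → F), u ξ ^ (2*(m+1))) := by
        have h2 := Finset.sum_mul_sq_le_sq_mul_sq (univ.erase (0:Fin d → F))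
          (fun ξ => u ξ ^ m) (fun ξ => u ξ ^ (m+1))
        have e2 : ∀ ξ : Fin d → F, u ξ ^ m * u ξ ^ (m+1) = u ξ ^ (2*m+1) := by
          intro ξ; rw [← pow_add]; congr 1; omega
        have e3 : ∀ ξ : Fin d → F, (u ξ ^ m)^2 = u ξ ^ (2*m) := by
          intro ξ; rw [← pow_mul]; congr 1; omega
        have e4 : ∀ ξ : Fin d → F, (u ξ ^ (m+1))^2 = u ξ ^ (2*(m+1)) := by
          intro ξ; rw [← pow_mul]; congr 1; omega
        simp only [e2, e3, e4] at h2
        exact h2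
      have hs0 : 0 ≤ ∑ ξ ∈ univ.erase (0:Fin d → F), u ξ ^ (2*m+1) :=
        Finset.sum_nonneg fun ξ _ => by positivity
      have h3 : ∑ ξ ∈ univ.erase (0:Fin d → F), u ξ ^ (2*m) ≤ q'^d * Λm := by
        rw [hidm]
        exact Finset.sum_le_sum_of_subset_of_nonneg (Finset.subset_univ _)
          (fun ξ _ _ => by positivity)
      have h4 : ∑ ξ ∈ univ.erase (0:Fin d → F), u ξ ^ (2*(m+1)) ≤ q'^d * Λm1 := by
        rw [hidm1]
        exact Finset.sum_le_sum_of_subset_of_nonneg (Finset.subset_univ _)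
          (fun ξ _ _ => by positivity)
      have h5 : (∑ ξ ∈ univ.erase (0:Fin d → F), u ξ ^ (2*m+1))^2
          ≤ (q'^d * Λm) * (q'^d * Λm1) := by
        refine le_trans h1 (mul_le_mul h3 h4 ?_ ?_)
        · exact Finset.sum_nonneg fun ξ _ => by positivity
        · positivity
      rw [← Real.sqrt_mul (by positivity)]
      exact (Real.le_sqrt hs0 (by positivity)).mpr h5
    -- combine
    have hmain : q'^d * Λm1 ≤ N^(2*m+1) * (Nat.card V : ℝ)
        + (R3 * Real.sqrt (q'^d * Λm)) * Real.sqrt (q'^d * Λm1) := by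
      refine le_trans hmix ?_
      refine add_le_add le_rfl ?_
      calc ∑ ξ ∈ univ.erase (0 : Fin d → F), u ξ ^ (2*m+1) * ‖SB χ V.toFinset ξ‖
          ≤ ∑ ξ ∈ univ.erase (0 : Fin d → F), u ξ ^ (2*m+1) * R3 := by
            refine Finset.sum_le_sum fun ξ hξ => ?_
            exact mul_le_mul_of_nonneg_left (hSBV ξ (Finset.mem_erase.mp hξ).1)
              (by positivity)
        _ = R3 * ∑ ξ ∈ univ.erase (0 : Fin d → F), u ξ ^ (2*m+1) := by
            rw [← Finset.sum_mul]; ring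
        _ ≤ R3 * (Real.sqrt (q'^d * Λm) * Real.sqrt (q'^d * Λm1)) :=
            mul_le_mul_of_nonneg_left hCS hR3nn
        _ = (R3 * Real.sqrt (q'^d * Λm)) * Real.sqrt (q'^d * Λm1) := by ring
    have hquad := quad (x := q'^d * Λm1) (by positivity) (by positivity)
      (by positivity) hmain
    have hsq2 : (R3 * Real.sqrt (q'^d * Λm))^2 = c3^2 * q'^(d-1) * (q'^d * Λm) := by
      rw [mul_pow, Real.sq_sqrt (by positivity), hR3sq]
    rw [hsq2] at hquad
    -- divide by q'^d
    have hqd0 : (0:ℝ) < q'^d := by positivity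
    have hΛm1b : Λm1 ≤ 2*(N^(2*m+1) * (Nat.card V : ℝ))/q'^d + 4*c3^2*q'^(d-1)*Λm := by
      have h6 : Λm1 = (q'^d * Λm1)/q'^d := by field_simp
      rw [h6]
      calc (q'^d * Λm1)/q'^d
          ≤ (2*(N^(2*m+1) * (Nat.card V : ℝ)) + 4*(c3^2*q'^(d-1)*(q'^d * Λm)))/q'^d := by
            gcongr
        _ = 2*(N^(2*m+1) * (Nat.card V : ℝ))/q'^d + 4*c3^2*q'^(d-1)*Λm := by
            field_simp
    -- bound |V|
    have h7 : 2*(N^(2*m+1) * (Nat.card V : ℝ))/q'^d ≤ 2*c2*(N^(2*m+1)/q') := by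
      calc 2*(N^(2*m+1) * (Nat.card V : ℝ))/q'^d
          ≤ 2*(N^(2*m+1) * (c2 * q'^(d-1)))/q'^d := by gcongr
        _ = 2*c2*(N^(2*m+1)/q') := by
            rw [hqd]
            field_simp
    -- IH
    have h8 : 4*c3^2*q'^(d-1)*Λm
        ≤ 4*c3^2*B^m*(N^(2*m+1)/q' + q'^((d-1)*m)*N) := by
      have e5 : (d-1)*(m-1)+(d-1) = (d-1)*m := by
        have e6 : m - 1 + 1 = m := by omega
        calc (d-1)*(m-1)+(d-1) = (d-1)*((m-1)+1) := by ring
          _ = (d-1)*m := by rw [e6]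
      have e7 : N^2 * N^(2*m-1) = N^(2*m+1) := by
        rw [← pow_add]; congr 1; omega
      calc 4*c3^2*q'^(d-1)*Λm
          ≤ 4*c3^2*q'^(d-1)*(B^m * (N^(2*m-1)/q' + q'^((d-1)*(m-1))*N)) := by
            apply mul_le_mul_of_nonneg_left ih (by positivity)
        _ = 4*c3^2*B^m*(q'^(d-1)*N^(2*m-1)/q' + q'^((d-1)*(m-1)+(d-1))*N) := by
            rw [pow_add]; ring
        _ ≤ 4*c3^2*B^m*(N^2*N^(2*m-1)/q' + q'^((d-1)*(m-1)+(d-1))*N) := by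
            gcongr
        _ = 4*c3^2*B^m*(N^(2*m+1)/q' + q'^((d-1)*m)*N) := by
            rw [e5, e7]
    clear hmix hidm hidm1 hCS hmain hquad hsq2 hSBV hu
    -- final
    have hBpow : 2*c2 + 4*c3^2*B^m ≤ B^(m+1) := by
      have h10 : (1:ℝ) ≤ B^m := one_le_pow₀ hB1
      have h12 : 2*c2 + 4*c3^2*B^m ≤ (2*c2 + 4*c3^2)*B^m := by
        nlinarith [mul_nonneg hc2.le (sub_nonneg.mpr h10)]
      have h14 : 2*c2 + 4*c3^2 ≤ B := by rw [hBdef]; nlinarith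
      have h13 : (2*c2 + 4*c3^2)*B^m ≤ B*B^m :=
        mul_le_mul_of_nonneg_right h14 (pow_nonneg (by linarith) m)
      calc 2*c2 + 4*c3^2*B^m ≤ (2*c2+4*c3^2)*B^m := h12
        _ ≤ B*B^m := h13
        _ = B^(m+1) := by rw [pow_succ]; ring
    have e8 : 2*(m+1)-1 = 2*m+1 := by omega
    have e9 : (m+1)-1 = m := by omega
    rw [e8, e9]
    set T1 := N^(2*m+1)/q' with hT1def
    set T2 := q'^((d-1)*m)*N with hT2def
    have hT1 : 0 ≤ T1 := by rw [hT1def]; positivity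
    have hT2 : 0 ≤ T2 := by rw [hT2def]; positivity
    have hfin : Λm1 ≤ 2*c2*T1 + 4*c3^2*B^m*(T1+T2) := by
      calc Λm1 ≤ 2*(N^(2*m+1) * (Nat.card V : ℝ))/q'^d + 4*c3^2*q'^(d-1)*Λm := hΛm1b
        _ ≤ 2*c2*T1 + 4*c3^2*B^m*(T1+T2) := add_le_add h7 h8
    calc Λm1 ≤ 2*c2*T1 + 4*c3^2*B^m*(T1+T2) := hfin
      _ ≤ (2*c2 + 4*c3^2*B^m)*(T1+T2) := by nlinarith [pow_nonneg (le_trans zero_le_one hB1) m]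
      _ ≤ B^(m+1)*(T1+T2) := by
          apply mul_le_mul_of_nonneg_right hBpow (by linarith)

end Stmt14


/-- for `d ≥ 2`, odd `k ≥ 3` and `c₁, c₂, c₃ > 0` there is `C > 0` such that
for every odd prime power `q`, every `(c₁,c₂,c₃)`-regular `V ⊆ 𝔽_q^d` and every `E ⊆ V` with
`|E| > q^{(d-1)/2}`, one has
`Λ_{k-1}(E) Λ_{k+1}(E) ≤ C (q^{(d-1)(k-2)} |E|² + q^{((d-1)(k-3)-2)/2} |E|^{k+1} + q^{-2} |E|^{2k-2})`. -/
theorem stmt_14 (d k : ℕ) (hd : 2 ≤ d) (hk : 3 ≤ k) (hko : Odd k)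
    (c1 c2 c3 : ℝ) (hc1 : 0 < c1) (hc2 : 0 < c2) (hc3 : 0 < c3) :
    ∃ C : ℝ, 0 < C ∧
      ∀ (F : Type) [Field F] [Fintype F], Odd (Fintype.card F) →
        ∀ χ : AddChar F ℂ, χ ≠ 1 →
          ∀ V : Set (Fin d → F), IsRegularVariety c1 c2 c3 χ V →
            ∀ E : Set (Fin d → F), E ⊆ V →
              (Fintype.card F : ℝ) ^ (((d : ℝ) - 1) / 2) < (Nat.card E : ℝ) →
              (energy ((k - 1) / 2) E : ℝ) * (energy ((k + 1) / 2) E : ℝ) ≤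
                C * ((Fintype.card F : ℝ) ^ ((d - 1) * (k - 2)) * (Nat.card E : ℝ) ^ 2 +
                  (Fintype.card F : ℝ) ^ ((((d : ℝ) - 1) * ((k : ℝ) - 3) - 2) / 2) *
                    (Nat.card E : ℝ) ^ (k + 1) +
                  (Nat.card E : ℝ) ^ (2 * k - 2) / (Fintype.card F : ℝ) ^ 2) := by
  classical
  obtain ⟨t0, ht⟩ := hko
  have ht1 : 1 ≤ t0 := by omega
  obtain ⟨s, rfl⟩ : ∃ s, t0 = s + 1 := ⟨t0 - 1, by omega⟩
  set B := 1 + 2*c2 + 8*c3^2 with hBdef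
  have hB1 : (1:ℝ) ≤ B := by rw [hBdef]; nlinarith
  have hB0 : (0:ℝ) < B := by linarith
  have hBk1 : (1:ℝ) ≤ B^k := one_le_pow₀ hB1
  refine ⟨2 * B^k, by linarith, ?_⟩
  intro F _ _ _hodd χ hχ V hV E hEV hE
  obtain ⟨_hV1, hV2, hV3⟩ := hV
  set q' := (Fintype.card F : ℝ) with hq'
  set N := (Nat.card E : ℝ) with hNdef
  have hq0 : (0:ℝ) < q' := by rw [hq']; exact_mod_cast Fintype.card_pos
  have hq'ne : q' ≠ 0 := ne_of_gt hq0
  have hN0 : (0:ℝ) ≤ N := by rw [hNdef]; positivity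
  have hd1 : 1 ≤ d := by omega
  have ecast : ((d - 1 : ℕ) : ℝ) = (d : ℝ) - 1 := by
    rw [Nat.cast_sub hd1, Nat.cast_one]
  -- q'^{d-1} ≤ N²
  have hNq : q' ^ (d-1) ≤ N^2 := by
    have h1 : q' ^ (((d:ℝ)-1)/2) ≤ N := le_of_lt hE
    have h0 : (0:ℝ) ≤ q' ^ (((d:ℝ)-1)/2) := Real.rpow_nonneg hq0.le _
    have h2 : (q' ^ (((d:ℝ)-1)/2))^2 ≤ N^2 := by nlinarith
    have e2 : q'^(d-1) = (q' ^ (((d:ℝ)-1)/2))^2 := by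
      rw [← Real.rpow_natCast (q' ^ (((d:ℝ)-1)/2)) 2, ← Real.rpow_mul hq0.le,
        ← Real.rpow_natCast q' (d-1), ecast]
      congr 1
      push_cast
      ring
    rw [e2]; exact h2
  -- energies bound
  have hkey := Stmt14.key_energy hd1 χ hχ c2 c3 hc2 hc3 V E hEV hV2 hV3 hNq
  have hL1 := hkey (s+1) (by omega)
  have hL2 := hkey (s+1+1) (by omega)
  have ek1 : (k-1)/2 = s+1 := by omega
  have ek2 : (k+1)/2 = s+1+1 := by omega
  rw [ek1, ek2]
  have ee1 : 2*(s+1)-1 = 2*s+1 := by omega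
  have ee2 : (s+1)-1 = s := by omega
  have ee3 : 2*(s+1+1)-1 = 2*s+3 := by omega
  have ee4 : (s+1+1)-1 = s+1 := by omega
  rw [ee1, ee2] at hL1
  rw [ee3, ee4] at hL2
  -- rewrite goal exponents
  have ek3 : (d-1)*(k-2) = (d-1)*(2*s+1) := by congr 1; omega
  have ek4 : k+1 = 2*s+4 := by omega
  have ek5 : 2*k-2 = 4*s+4 := by omega
  rw [ek3, ek4, ek5]
  -- middle rpow term
  have hmid : q' ^ ((((d:ℝ)-1) * ((k:ℝ)-3) - 2)/2) = q'^((d-1)*s) / q' := by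
    have e3 : (((d-1)*s : ℕ) : ℝ) = ((d:ℝ)-1)*(s:ℝ) := by
      push_cast [ecast]
      ring
    have ekr : (k:ℝ) = 2*(s:ℝ)+3 := by
      rw [ht]; push_cast; ring
    have e4 : (((d:ℝ)-1) * ((k:ℝ)-3) - 2)/2 = (((d-1)*s : ℕ) : ℝ) - 1 := by
      rw [e3, ekr]; ring
    rw [e4, Real.rpow_sub hq0, Real.rpow_one, Real.rpow_natCast]
  rw [hmid]
  -- abbreviations
  set a1 := N^(2*s+1)/q' with ha1def
  set a2 := q'^((d-1)*s)*N with ha2def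
  set b1 := N^(2*s+3)/q' with hb1def
  set b2 := q'^((d-1)*(s+1))*N with hb2def
  have ha1 : 0 ≤ a1 := by rw [ha1def]; exact div_nonneg (pow_nonneg hN0 _) hq0.le
  have ha2 : 0 ≤ a2 := by rw [ha2def]; exact mul_nonneg (pow_nonneg hq0.le _) hN0
  have hb1 : 0 ≤ b1 := by rw [hb1def]; exact div_nonneg (pow_nonneg hN0 _) hq0.le
  have hb2 : 0 ≤ b2 := by rw [hb2def]; exact mul_nonneg (pow_nonneg hq0.le _) hN0
  have hE1 : 0 ≤ ((energy (s+1+1) E : ℕ) : ℝ) := by positivity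
  have hBt0 : 0 ≤ B^(s+1) * (a1 + a2) :=
    mul_nonneg (pow_nonneg hB0.le _) (by linarith)
  have hprod := mul_le_mul hL1 hL2 hE1 hBt0
  -- expand product
  have hBk : B^(s+1) * B^(s+1+1) = B^k := by
    rw [← pow_add]; congr 1; omega
  have hexpand : (B^(s+1)*(a1+a2)) * (B^(s+1+1)*(b1+b2))
      = B^k * (a1*b1 + a1*b2 + a2*b1 + a2*b2) := by
    rw [← hBk]; ring
  -- four products
  have hp11 : a1*b1 = N^(4*s+4)/q'^2 := by
    rw [ha1def, hb1def, div_mul_div_comm, ← pow_add, sq]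
    have : (2*s+1)+(2*s+3) = 4*s+4 := by ring
    rw [this]
  have hp22 : a2*b2 = q'^((d-1)*(2*s+1))*N^2 := by
    rw [ha2def, hb2def]
    have e5 : (d-1)*s + (d-1)*(s+1) = (d-1)*(2*s+1) := by ring
    calc q'^((d-1)*s)*N*(q'^((d-1)*(s+1))*N) = q'^((d-1)*s + (d-1)*(s+1))*N^2 := by
          rw [pow_add]; ring
      _ = q'^((d-1)*(2*s+1))*N^2 := by rw [e5]
  have hp21 : a2*b1 = q'^((d-1)*s)/q' * N^(2*s+4) := by
    rw [ha2def, hb1def]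
    have e6 : 1 + (2*s+3) = 2*s+4 := by ring
    calc q'^((d-1)*s)*N*(N^(2*s+3)/q') = q'^((d-1)*s)/q' * (N^1*N^(2*s+3)) := by ring
      _ = q'^((d-1)*s)/q' * N^(2*s+4) := by rw [← pow_add, e6]
  have hp12 : a1*b2 ≤ q'^((d-1)*s)/q' * N^(2*s+4) := by
    rw [ha1def, hb2def]
    have e7 : (d-1)*(s+1) = (d-1)*s + (d-1) := by ring
    have e8 : (2*s+1) + 1 + 2 = 2*s+4 := by ring
    calc N^(2*s+1)/q'*(q'^((d-1)*(s+1))*N)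
        = q'^((d-1)*s)/q' * (N^(2*s+1) * N^1 * q'^(d-1)) := by
          rw [e7, pow_add]; ring
      _ ≤ q'^((d-1)*s)/q' * (N^(2*s+1) * N^1 * N^2) := by
          have hc : 0 ≤ q'^((d-1)*s)/q' := div_nonneg (pow_nonneg hq0.le _) hq0.le
          have hm : 0 ≤ N^(2*s+1) * N^1 := mul_nonneg (pow_nonneg hN0 _) (pow_nonneg hN0 _)
          apply mul_le_mul_of_nonneg_left _ hc
          exact mul_le_mul_of_nonneg_left hNq hm
      _ = q'^((d-1)*s)/q' * N^(2*s+4) := by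
          rw [← pow_add, ← pow_add, e8]
  -- finish
  have hfour : a1*b1 + a1*b2 + a2*b1 + a2*b2
      ≤ q'^((d-1)*(2*s+1))*N^2 + 2*(q'^((d-1)*s)/q' * N^(2*s+4)) + N^(4*s+4)/q'^2 := by
    rw [hp11, hp22, hp21]
    linarith [hp12]
  have hgoal0 : ((energy (s+1) E : ℕ) : ℝ) * ((energy (s+1+1) E : ℕ) : ℝ)
      ≤ B^k * (q'^((d-1)*(2*s+1))*N^2 + 2*(q'^((d-1)*s)/q' * N^(2*s+4)) + N^(4*s+4)/q'^2) := by
    calc ((energy (s+1) E : ℕ) : ℝ) * ((energy (s+1+1) E : ℕ) : ℝ)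
        ≤ (B^(s+1)*(a1+a2)) * (B^(s+1+1)*(b1+b2)) := hprod
      _ = B^k * (a1*b1 + a1*b2 + a2*b1 + a2*b2) := hexpand
      _ ≤ B^k * (q'^((d-1)*(2*s+1))*N^2 + 2*(q'^((d-1)*s)/q' * N^(2*s+4)) + N^(4*s+4)/q'^2) := by
          apply mul_le_mul_of_nonneg_left hfour (pow_nonneg hB0.le _)
  calc ((energy (s+1) E : ℕ) : ℝ) * ((energy (s+1+1) E : ℕ) : ℝ)
      ≤ B^k * (q'^((d-1)*(2*s+1))*N^2 + 2*(q'^((d-1)*s)/q' * N^(2*s+4)) + N^(4*s+4)/q'^2) := hgoal0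
    _ ≤ 2*B^k * (q'^((d-1)*(2*s+1))*N^2 + q'^((d-1)*s)/q' * N^(2*s+4) + N^(4*s+4)/q'^2) := by
        have t1 : 0 ≤ q'^((d-1)*(2*s+1))*N^2 := mul_nonneg (pow_nonneg hq0.le _) (pow_nonneg hN0 _)
        have t2 : 0 ≤ q'^((d-1)*s)/q' * N^(2*s+4) :=
          mul_nonneg (div_nonneg (pow_nonneg hq0.le _) hq0.le) (pow_nonneg hN0 _)
        have t3 : 0 ≤ N^(4*s+4)/q'^2 := div_nonneg (pow_nonneg hN0 _) (pow_nonneg hq0.le _)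
        have hBk0 : (0:ℝ) ≤ B^k := pow_nonneg hB0.le _
        have hsum : q'^((d-1)*(2*s+1))*N^2 + 2*(q'^((d-1)*s)/q' * N^(2*s+4)) + N^(4*s+4)/q'^2
            ≤ 2*(q'^((d-1)*(2*s+1))*N^2 + q'^((d-1)*s)/q' * N^(2*s+4) + N^(4*s+4)/q'^2) := by
          linarith
        calc B^k * (q'^((d-1)*(2*s+1))*N^2 + 2*(q'^((d-1)*s)/q' * N^(2*s+4)) + N^(4*s+4)/q'^2)
            ≤ B^k * (2*(q'^((d-1)*(2*s+1))*N^2 + q'^((d-1)*s)/q' * N^(2*s+4) + N^(4*s+4)/q'^2)) :=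
              mul_le_mul_of_nonneg_left hsum hBk0
          _ = 2*B^k * (q'^((d-1)*(2*s+1))*N^2 + q'^((d-1)*s)/q' * N^(2*s+4) + N^(4*s+4)/q'^2) := by
              ring
end

section
/- For every integer d ≥ 2, every even integer k ≥ 6, and all constants c_1, c_2, c_3 > 0, there exists a constant C > 0 such that for every power q of an odd prime, every (c_1,c_2,c_3)-regular set V ⊆ F_q^d, and every E ⊆ V with |E| > q^{(d−1)/2}, one has Λ_k(E) ≤ C ( q^{(d−1)(k−4)/2} Λ_4(E) + q^{−1} |E|^{k−1} ). -/
open Finset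

set_option linter.unusedSectionVars false

section Aux
variable {F : Type} [Field F] [Fintype F] [DecidableEq F] {d : ℕ} (χ : AddChar F ℂ)

/-- dot product -/
def dotL (ξ x : Fin d → F) : F := ∑ i, ξ i * x i

lemma dotL_add (ξ η x : Fin d → F) : dotL (ξ + η) x = dotL ξ x + dotL η x := by
  simp [dotL, add_mul, Finset.sum_add_distrib]

lemma dotL_sum {ι : Type*} (s : Finset ι) (ξ : Fin d → F) (f : ι → Fin d → F) :
    dotL ξ (∑ i ∈ s, f i) = ∑ i ∈ s, dotL ξ (f i) := by
  simp only [dotL, Finset.sum_apply, Finset.mul_sum]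
  exact Finset.sum_comm

lemma dotL_sub (ξ a b : Fin d → F) : dotL ξ (a - b) = dotL ξ a - dotL ξ b := by
  simp [dotL, mul_sub, Finset.sum_sub_distrib]

lemma addChar_sum {ι : Type*} (s : Finset ι) (f : ι → F) :
    χ (∑ i ∈ s, f i) = ∏ i ∈ s, χ (f i) := by
  classical
  induction s using Finset.induction_on with
  | empty => simp
  | insert a s' h ih => simp [Finset.sum_insert h, Finset.prod_insert h,
      AddChar.map_add_eq_mul, ih]

/-- orthogonality -/
lemma sum_char_dot (hχ : χ ≠ 1) (a : Fin d → F) :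
    ∑ ξ : Fin d → F, χ (dotL ξ a)
      = if a = 0 then ((Fintype.card F : ℂ) ^ d) else 0 := by
  classical
  by_cases ha : a = 0
  · simp [ha, dotL, Fintype.card_fun]
  · rw [if_neg ha]
    let ψ : AddChar (Fin d → F) ℂ :=
      { toFun := fun ξ => χ (dotL ξ a)
        map_zero_eq_one' := by simp [dotL]
        map_add_eq_mul' := by intro ξ η; simp [dotL_add, AddChar.map_add_eq_mul] }
    have : ∑ ξ : Fin d → F, ψ ξ = 0 := by
      rw [AddChar.sum_eq_zero_iff_ne_zero, AddChar.ne_zero_iff]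
      obtain ⟨i, hi⟩ : ∃ i, a i ≠ 0 := by
        by_contra h; push_neg at h; exact ha (funext h)
      obtain ⟨t, ht⟩ := AddChar.ne_one_iff.mp hχ
      refine ⟨Pi.single i (t * (a i)⁻¹), ?_⟩
      have hdot : dotL (Pi.single i (t * (a i)⁻¹)) a = t := by
        rw [dotL, Finset.sum_eq_single i]
        · rw [Pi.single_eq_same]; field_simp
        · intro j _ hj; rw [Pi.single_eq_of_ne hj, zero_mul]
        · intro h; exact absurd (Finset.mem_univ i) h
      show χ (dotL _ a) ≠ 1
      rw [hdot]; exact ht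
    exact this

end Aux

noncomputable section Aux2
open Finset
variable {F : Type} [Field F] [Fintype F] [DecidableEq F] {d : ℕ} (χ : AddChar F ℂ)

/-- unnormalized Fourier sum over a finset -/
def eS (A : Finset (Fin d → F)) (ξ : Fin d → F) : ℂ := ∑ x ∈ A, χ (dotL ξ x)

lemma eS_zero (A : Finset (Fin d → F)) : eS χ A 0 = (A.card : ℂ) := by
  simp [eS, dotL]

lemma conj_eS (A : Finset (Fin d → F)) (ξ : Fin d → F) :
    (starRingEnd ℂ) (eS χ A ξ) = ∑ x ∈ A, χ (-(dotL ξ x)) := by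
  rw [eS, map_sum]
  exact Finset.sum_congr rfl fun x _ => (AddChar.map_neg_eq_conj χ _).symm

/-- the master counting identity -/
lemma count_eq (hχ : χ ≠ 1) (m : ℕ) (A B : Fin m → Finset (Fin d → F)) :
    ∑ ξ : Fin d → F, ((∏ i, eS χ (A i) ξ) * ∏ i, (starRingEnd ℂ) (eS χ (B i) ξ))
      = (Fintype.card F : ℂ) ^ d *
        (((Fintype.piFinset A ×ˢ Fintype.piFinset B).filter
            (fun p => ∑ i, p.1 i = ∑ i, p.2 i)).card : ℂ) := by
  have h1 : ∀ ξ, (∏ i, eS χ (A i) ξ)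
      = ∑ x ∈ Fintype.piFinset A, χ (dotL ξ (∑ i, x i)) := by
    intro ξ
    rw [show (∏ i, eS χ (A i) ξ) = ∑ x ∈ Fintype.piFinset A, ∏ i, χ (dotL ξ (x i)) from
      Finset.prod_univ_sum _ _]
    refine Finset.sum_congr rfl fun x _ => ?_
    rw [dotL_sum, addChar_sum]
  have h2 : ∀ ξ, (∏ i, (starRingEnd ℂ) (eS χ (B i) ξ))
      = ∑ y ∈ Fintype.piFinset B, χ (-(dotL ξ (∑ i, y i))) := by
    intro ξ
    simp only [conj_eS]
    rw [Finset.prod_univ_sum]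
    refine Finset.sum_congr rfl fun y _ => ?_
    rw [dotL_sum, ← addChar_sum, ← Finset.sum_neg_distrib]
  calc ∑ ξ : Fin d → F, ((∏ i, eS χ (A i) ξ) * ∏ i, (starRingEnd ℂ) (eS χ (B i) ξ))
      = ∑ ξ : Fin d → F, ∑ x ∈ Fintype.piFinset A, ∑ y ∈ Fintype.piFinset B,
          χ (dotL ξ ((∑ i, x i) - (∑ i, y i))) := by
        refine Finset.sum_congr rfl fun ξ _ => ?_
        rw [h1, h2, Finset.sum_mul_sum]
        refine Finset.sum_congr rfl fun x _ => Finset.sum_congr rfl fun y _ => ?_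
        rw [← AddChar.map_add_eq_mul, dotL_sub]; ring_nf
    _ = ∑ x ∈ Fintype.piFinset A, ∑ y ∈ Fintype.piFinset B,
          (if (∑ i, x i) = (∑ i, y i) then ((Fintype.card F : ℂ) ^ d) else 0) := by
        rw [Finset.sum_comm]
        refine Finset.sum_congr rfl fun x _ => ?_
        rw [Finset.sum_comm]
        refine Finset.sum_congr rfl fun y _ => ?_
        rw [sum_char_dot χ hχ]
        simp only [sub_eq_zero]
    _ = _ := by
        rw [Finset.card_filter]
        push_cast
        rw [Finset.mul_sum, Finset.sum_product]
        simp [mul_ite]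

end Aux2

noncomputable section Aux3
open Finset
variable {F : Type} [Field F] [Fintype F] [DecidableEq F] {d : ℕ} (χ : AddChar F ℂ)

lemma energy_eq_card (m : ℕ) (E : Set (Fin d → F)) [DecidablePred (· ∈ E)] :
    (energy m E : ℕ) = (((Fintype.piFinset fun _ : Fin m => univ.filter (· ∈ E)) ×ˢ
        (Fintype.piFinset fun _ : Fin m => univ.filter (· ∈ E))).filter
        (fun p => ∑ i, p.1 i = ∑ i, p.2 i)).card := by
  classical
  rw [energy, Nat.card_eq_fintype_card, Fintype.card_subtype]
  congr 1
  ext p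
  simp only [Finset.mem_filter, Finset.mem_univ, true_and, Finset.mem_product,
    Fintype.mem_piFinset]
  tauto

lemma energy_fourier (hχ : χ ≠ 1) (m : ℕ) (E : Set (Fin d → F)) [DecidablePred (· ∈ E)] :
    ∑ ξ : Fin d → F, (‖eS χ (univ.filter (· ∈ E)) ξ‖) ^ (2 * m)
      = (Fintype.card F : ℝ) ^ d * (energy m E : ℝ) := by
  classical
  apply Complex.ofReal_injective
  push_cast
  calc (∑ ξ : Fin d → F, ((‖eS χ (univ.filter (· ∈ E)) ξ‖ : ℝ) : ℂ) ^ (2 * m))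
      = ∑ ξ : Fin d → F, ((∏ _i : Fin m, eS χ (univ.filter (· ∈ E)) ξ) *
          ∏ _i : Fin m, (starRingEnd ℂ) (eS χ (univ.filter (· ∈ E)) ξ)) := by
        refine Finset.sum_congr rfl fun ξ _ => ?_
        set e := eS χ (univ.filter (· ∈ E)) ξ
        rw [Finset.prod_const, Finset.prod_const, Finset.card_univ, Fintype.card_fin,
          ← mul_pow, Complex.mul_conj, Complex.normSq_eq_norm_sq, pow_mul]
        push_cast
        ring
    _ = (Fintype.card F : ℂ) ^ d * ((energy m E : ℕ) : ℂ) := by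
        rw [count_eq χ hχ m _ _, energy_eq_card]

lemma ftF_eS (E : Set (Fin d → F)) (ξ : Fin d → F) [DecidablePred (· ∈ E)] :
    ftF χ E ξ = ((Fintype.card F : ℂ) ^ d)⁻¹ *
      (starRingEnd ℂ) (eS χ (univ.filter (· ∈ E)) ξ) := by
  rw [ftF, conj_eS]
  congr 1
  rw [Finset.sum_filter]
  exact Finset.sum_congr rfl fun x _ => (Set.indicator_apply E _ x)

lemma abs_eS (E : Set (Fin d → F)) (ξ : Fin d → F) [DecidablePred (· ∈ E)] :
    ‖eS χ (univ.filter (· ∈ E)) ξ‖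
      = (Fintype.card F : ℝ) ^ d * ‖ftF χ E ξ‖ := by
  have hq : (0:ℝ) < (Fintype.card F : ℝ) := by positivity
  rw [ftF_eS, norm_mul, norm_inv, Complex.norm_conj, norm_pow, Complex.norm_natCast]
  field_simp

end Aux3

noncomputable section Aux4
open Finset
variable {F : Type} [Field F] [Fintype F] [DecidableEq F] {d : ℕ} (χ : AddChar F ℂ)

lemma natcard_set_eq (E : Set (Fin d → F)) [DecidablePred (· ∈ E)] :
    (Nat.card E : ℕ) = (univ.filter (· ∈ E)).card := by
  rw [Nat.card_eq_fintype_card, Fintype.card_subtype]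

lemma sqrt_arith {q : ℝ} (hq : 0 < q) {d : ℕ} (hd : 1 ≤ d) :
    q ^ d * q ^ (-(((d : ℝ) + 1) / 2)) = Real.sqrt (q ^ (d - 1)) := by
  have h1 : q ^ d = q ^ (d : ℝ) := by rw [Real.rpow_natCast]
  have h2 : q ^ (d - 1) = q ^ (((d : ℕ) : ℝ) - 1) := by
    rw [← Real.rpow_natCast q (d - 1), Nat.cast_sub hd]; norm_num
  rw [h1, h2, ← Real.rpow_add hq, Real.sqrt_eq_rpow, ← Real.rpow_mul hq.le]
  congr 1
  ring

lemma quad_bound {a b s D : ℝ} (hb : 0 ≤ b) (hD : 0 ≤ D) (hs : 0 ≤ s)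
    (h1 : a ≤ b + s) (h2 : s ^ 2 = D * a) : a ≤ 2 * b + 4 * D := by
  by_cases hab : a ≤ 2 * b
  · linarith
  · push_neg at hab
    have ha0 : 0 < a := by linarith
    have h2s : a < 2 * s := by linarith
    have h3 : a * a < (2 * s) * (2 * s) := mul_lt_mul'' h2s h2s ha0.le ha0.le
    have h4 : a * a < (4 * D) * a := by
      calc a * a < (2 * s) * (2 * s) := h3
        _ = 4 * s ^ 2 := by ring
        _ = (4 * D) * a := by rw [h2]; ring
    have := (mul_lt_mul_iff_left₀ ha0).mp h4
    linarith

lemma step_ineq (hχ : χ ≠ 1) (E V : Set (Fin d → F))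
    [DecidablePred (· ∈ E)] [DecidablePred (· ∈ V)] (hEV : E ⊆ V)
    {c2 c3 : ℝ} (hc2 : 0 ≤ c2) (hc3 : 0 ≤ c3) (hd : 1 ≤ d)
    (hV2 : (Nat.card V : ℝ) ≤ c2 * (Fintype.card F : ℝ) ^ (d - 1))
    (hV3 : ∀ ξ : Fin d → F, ξ ≠ 0 →
      ‖ftF χ V ξ‖ ≤ c3 * (Fintype.card F : ℝ) ^ (-(((d : ℝ) + 1) / 2)))
    (m : ℕ) :
    (energy (m + 1) E : ℝ) ≤
      2 * c2 * (Nat.card E : ℝ) ^ (2 * m + 1) / (Fintype.card F : ℝ)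
        + 4 * c3 ^ 2 * (Fintype.card F : ℝ) ^ (d - 1) * (energy m E : ℝ) := by
  classical
  set q : ℝ := (Fintype.card F : ℝ) with hqdef
  have hq : 0 < q := by positivity
  have hqd : (0:ℝ) < q ^ d := by positivity
  set Ef : Finset (Fin d → F) := univ.filter (· ∈ E) with hEf
  set Vf : Finset (Fin d → F) := univ.filter (· ∈ V) with hVf
  set aE : (Fin d → F) → ℝ := fun ξ => ‖eS χ Ef ξ‖ with haE
  have haEnn : ∀ ξ, 0 ≤ aE ξ := fun ξ => norm_nonneg _
  set aV : (Fin d → F) → ℝ := fun ξ => ‖eS χ Vf ξ‖ with haV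
  set A : Fin (m + 1) → Finset (Fin d → F) := fun i => if i = 0 then Vf else Ef with hA
  set N : ℕ := (((Fintype.piFinset A) ×ˢ (Fintype.piFinset fun _ : Fin (m+1) => Ef)).filter
      (fun p => ∑ i, p.1 i = ∑ i, p.2 i)).card with hN
  -- energy ≤ N
  have h1 : (energy (m + 1) E : ℝ) ≤ (N : ℝ) := by
    have : energy (m + 1) E ≤ N := by
      rw [energy_eq_card]
      apply Finset.card_le_card
      apply Finset.filter_subset_filter
      apply Finset.product_subset_product _ le_rfl
      have hsub : ∀ i, Ef ⊆ A i := by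
        intro i x hx
        rw [hA]
        dsimp only
        by_cases hi : i = 0
        · rw [if_pos hi, hVf, Finset.mem_filter]
          rw [hEf, Finset.mem_filter] at hx
          exact ⟨hx.1, hEV hx.2⟩
        · rw [if_neg hi]; exact hx
      intro f hf
      rw [Fintype.mem_piFinset] at hf ⊢
      exact fun i => hsub i (hf i)
    exact_mod_cast this
  -- Fourier bound for N
  have habsprod : ∀ ξ, ‖(∏ i, eS χ (A i) ξ) *
      ∏ _i : Fin (m+1), (starRingEnd ℂ) (eS χ Ef ξ)‖ = aV ξ * aE ξ ^ (2 * m + 1) := by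
    intro ξ
    rw [norm_mul, norm_prod, norm_prod]
    have e1 : ∏ i : Fin (m+1), ‖eS χ (A i) ξ‖ = aV ξ * aE ξ ^ m := by
      have hc : ∀ i ∈ univ.erase (0 : Fin (m+1)),
          ‖eS χ (A i) ξ‖ = aE ξ := by
        intro i hi
        rw [hA]
        dsimp only
        rw [if_neg (Finset.mem_erase.mp hi).1]
      rw [← Finset.mul_prod_erase univ _ (Finset.mem_univ (0 : Fin (m+1))),
        Finset.prod_congr rfl hc, Finset.prod_const,
        Finset.card_erase_of_mem (Finset.mem_univ 0), Finset.card_univ, Fintype.card_fin]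
      simp [hA, haV]
    have e2 : ∏ _i : Fin (m+1), ‖(starRingEnd ℂ) (eS χ Ef ξ)‖ = aE ξ ^ (m+1) := by
      rw [Finset.prod_congr rfl (fun i _ => Complex.norm_conj _), Finset.prod_const,
        Finset.card_univ, Fintype.card_fin]
    rw [e1, e2]
    ring
  have h2 : (q ^ d) * (N : ℝ) ≤ ∑ ξ : Fin d → F, aV ξ * aE ξ ^ (2 * m + 1) := by
    have hid := count_eq χ hχ (m+1) A (fun _ => Ef)
    have heq : (q ^ d) * (N : ℝ) = ‖∑ ξ : Fin d → F,
        ((∏ i, eS χ (A i) ξ) * ∏ _i : Fin (m+1), (starRingEnd ℂ) (eS χ Ef ξ))‖ := by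
      rw [hid, norm_mul, norm_pow, Complex.norm_natCast, Complex.norm_natCast]
    rw [heq]
    exact le_trans (norm_sum_le _ _)
      (le_of_eq (Finset.sum_congr rfl fun ξ _ => habsprod ξ))
  -- identify some values
  have haV0 : aV 0 = (Vf.card : ℝ) := by
    rw [haV]; dsimp only; rw [eS_zero, Complex.norm_natCast]
  have haE0 : aE 0 = (Ef.card : ℝ) := by
    rw [haE]; dsimp only; rw [eS_zero, Complex.norm_natCast]
  set Mv : ℝ := c3 * Real.sqrt (q ^ (d - 1)) with hMv
  have hMvnn : 0 ≤ Mv := by positivity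
  have hVbound : ∀ ξ ∈ univ.erase (0 : Fin d → F), aV ξ ≤ Mv := by
    intro ξ hξ
    have hξ0 := (Finset.mem_erase.mp hξ).1
    have := hV3 ξ hξ0
    rw [haV, hVf]
    dsimp only
    rw [abs_eS χ V ξ]
    calc (Fintype.card F : ℝ) ^ d * ‖ftF χ V ξ‖
        ≤ (Fintype.card F : ℝ) ^ d * (c3 * q ^ (-(((d:ℝ) + 1) / 2))) := by
          apply mul_le_mul_of_nonneg_left this (by positivity)
      _ = Mv := by rw [hMv, ← sqrt_arith hq hd]; ring
  set Lm : ℝ := (energy m E : ℝ) with hLm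
  set Lm1 : ℝ := (energy (m + 1) E : ℝ) with hLm1
  have hLmnn : 0 ≤ Lm := by positivity
  have hLm1nn : 0 ≤ Lm1 := by positivity
  have hsum2m : ∑ ξ ∈ univ.erase (0 : Fin d → F), aE ξ ^ (2 * m) ≤ q ^ d * Lm := by
    calc ∑ ξ ∈ univ.erase (0 : Fin d → F), aE ξ ^ (2 * m)
        ≤ ∑ ξ : Fin d → F, aE ξ ^ (2 * m) :=
          Finset.sum_le_sum_of_subset_of_nonneg (Finset.erase_subset _ _)
            (fun ξ _ _ => by positivity)
      _ = q ^ d * Lm := energy_fourier χ hχ m E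
  have hsum2m1 : ∑ ξ ∈ univ.erase (0 : Fin d → F), aE ξ ^ (2 * (m+1)) ≤ q ^ d * Lm1 := by
    calc ∑ ξ ∈ univ.erase (0 : Fin d → F), aE ξ ^ (2 * (m+1))
        ≤ ∑ ξ : Fin d → F, aE ξ ^ (2 * (m+1)) :=
          Finset.sum_le_sum_of_subset_of_nonneg (Finset.erase_subset _ _)
            (fun ξ _ _ => by positivity)
      _ = q ^ d * Lm1 := energy_fourier χ hχ (m+1) E
  -- Cauchy-Schwarz
  have hT : ∑ ξ ∈ univ.erase (0 : Fin d → F), aE ξ ^ (2 * m + 1)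
      ≤ q ^ d * Real.sqrt (Lm * Lm1) := by
    have hc := Finset.sum_mul_sq_le_sq_mul_sq (univ.erase (0 : Fin d → F))
      (fun ξ => aE ξ ^ m) (fun ξ => aE ξ ^ (m + 1))
    have he1 : ∀ ξ : Fin d → F, aE ξ ^ m * aE ξ ^ (m+1) = aE ξ ^ (2 * m + 1) := by
      intro ξ; rw [← pow_add]; congr 1; omega
    have he2 : ∀ ξ : Fin d → F, (aE ξ ^ m) ^ 2 = aE ξ ^ (2 * m) := by
      intro ξ; rw [← pow_mul]; congr 1; omega
    have he3 : ∀ ξ : Fin d → F, (aE ξ ^ (m+1)) ^ 2 = aE ξ ^ (2 * (m+1)) := by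
      intro ξ; rw [← pow_mul]; congr 1; omega
    simp only [he1, he2, he3] at hc
    have hsq : (∑ ξ ∈ univ.erase (0 : Fin d → F), aE ξ ^ (2 * m + 1)) ^ 2
        ≤ (q ^ d * Lm) * (q ^ d * Lm1) := by
      refine le_trans hc ?_
      apply mul_le_mul hsum2m hsum2m1 (Finset.sum_nonneg fun ξ _ => by positivity)
        (by positivity)
    have h0 : (0:ℝ) ≤ ∑ ξ ∈ univ.erase (0 : Fin d → F), aE ξ ^ (2 * m + 1) :=
      Finset.sum_nonneg fun ξ _ => by positivity
    have := (Real.le_sqrt h0 (by positivity)).mpr hsq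
    refine le_trans this (le_of_eq ?_)
    rw [show (q ^ d * Lm) * (q ^ d * Lm1) = (q^d)^2 * (Lm * Lm1) by ring,
      Real.sqrt_mul (by positivity), Real.sqrt_sq hqd.le]
  -- assemble
  have hmain : q ^ d * Lm1 ≤ (Vf.card : ℝ) * (Ef.card : ℝ) ^ (2*m+1)
      + Mv * (q ^ d * Real.sqrt (Lm * Lm1)) := by
    calc q ^ d * Lm1 ≤ q ^ d * (N : ℝ) := by
          apply mul_le_mul_of_nonneg_left h1 hqd.le
      _ ≤ ∑ ξ : Fin d → F, aV ξ * aE ξ ^ (2 * m + 1) := h2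
      _ = aV 0 * aE 0 ^ (2*m+1) + ∑ ξ ∈ univ.erase (0 : Fin d → F),
            aV ξ * aE ξ ^ (2 * m + 1) := by
          rw [← Finset.add_sum_erase univ _ (Finset.mem_univ (0 : Fin d → F))]
      _ ≤ (Vf.card : ℝ) * (Ef.card : ℝ) ^ (2*m+1)
            + Mv * (q ^ d * Real.sqrt (Lm * Lm1)) := by
          apply add_le_add
          · rw [haV0, haE0]
          · calc ∑ ξ ∈ univ.erase (0 : Fin d → F), aV ξ * aE ξ ^ (2 * m + 1)
                ≤ ∑ ξ ∈ univ.erase (0 : Fin d → F), Mv * aE ξ ^ (2 * m + 1) := by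
                  refine Finset.sum_le_sum fun ξ hξ => ?_
                  exact mul_le_mul_of_nonneg_right (hVbound ξ hξ) (by positivity)
              _ = Mv * ∑ ξ ∈ univ.erase (0 : Fin d → F), aE ξ ^ (2 * m + 1) := by
                  rw [Finset.mul_sum]
              _ ≤ Mv * (q ^ d * Real.sqrt (Lm * Lm1)) :=
                  mul_le_mul_of_nonneg_left hT hMvnn
  -- divide by q^d and finish with the quadratic argument
  have hVc : (Vf.card : ℝ) ≤ c2 * q ^ (d - 1) := by
    have : ((Nat.card V : ℕ) : ℝ) = (Vf.card : ℝ) := by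
      rw [natcard_set_eq V, hVf]
    rw [← this]; exact hV2
  have hEc : ((Nat.card E : ℕ) : ℝ) = (Ef.card : ℝ) := by
    rw [natcard_set_eq E, hEf]
  have hqd1 : q ^ d = q ^ (d - 1) * q := by
    rw [← pow_succ]; congr 1; omega
  set b : ℝ := c2 * (Nat.card E : ℝ) ^ (2*m+1) / q with hb
  have hbnn : 0 ≤ b := by positivity
  have hstep1 : Lm1 ≤ b + Mv * Real.sqrt (Lm * Lm1) := by
    rw [← mul_le_mul_iff_right₀ hqd]
    calc q ^ d * Lm1 ≤ (Vf.card : ℝ) * (Ef.card : ℝ) ^ (2*m+1)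
          + Mv * (q ^ d * Real.sqrt (Lm * Lm1)) := hmain
      _ ≤ c2 * q ^ (d-1) * (Ef.card : ℝ) ^ (2*m+1)
          + Mv * (q ^ d * Real.sqrt (Lm * Lm1)) := by
          apply add_le_add_left
          exact mul_le_mul_of_nonneg_right hVc (by positivity)
      _ = q ^ d * (b + Mv * Real.sqrt (Lm * Lm1)) := by
          rw [hb, ← hEc, hqd1]
          field_simp
  set s : ℝ := Mv * Real.sqrt (Lm * Lm1) with hs
  have hsnn : 0 ≤ s := by positivity
  set D : ℝ := c3 ^ 2 * q ^ (d-1) * Lm with hD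
  have hDnn : 0 ≤ D := by positivity
  have hs2 : s ^ 2 = D * Lm1 := by
    rw [hs, mul_pow, hMv, mul_pow, Real.sq_sqrt (by positivity),
      Real.sq_sqrt (mul_nonneg hLmnn hLm1nn), hD]
    ring
  have hquad : Lm1 ≤ 2 * b + 4 * D := quad_bound hbnn hDnn hsnn hstep1 hs2
  calc Lm1 ≤ 2 * b + 4 * D := hquad
    _ = 2 * c2 * (Nat.card E : ℝ) ^ (2 * m + 1) / q
        + 4 * c3 ^ 2 * q ^ (d - 1) * Lm := by rw [hb, hD]; ring

end Aux4

noncomputable section Aux5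
open Finset
variable {F : Type} [Field F] [Fintype F] [DecidableEq F] {d : ℕ} (χ : AddChar F ℂ)

lemma coef_bound {c2 c3 Kj : ℝ} (hc2 : 0 ≤ c2) (h1 : 1 ≤ Kj) :
    2 * c2 + 4 * c3 ^ 2 * Kj ≤ (4 * c3 ^ 2 + 2 * c2 + 1) * Kj := by nlinarith [sq_nonneg c3]

lemma coef_bound2 {c2 c3 Kj : ℝ} (hc2 : 0 ≤ c2) (hKj : 0 ≤ Kj) :
    4 * c3 ^ 2 * Kj ≤ (4 * c3 ^ 2 + 2 * c2 + 1) * Kj := by nlinarith [sq_nonneg c3]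

lemma main_est (hχ : χ ≠ 1) (E V : Set (Fin d → F))
    [DecidablePred (· ∈ E)] [DecidablePred (· ∈ V)] (hEV : E ⊆ V)
    {c2 c3 : ℝ} (hc2 : 0 ≤ c2) (hc3 : 0 ≤ c3) (hd : 1 ≤ d)
    (hV2 : (Nat.card V : ℝ) ≤ c2 * (Fintype.card F : ℝ) ^ (d - 1))
    (hV3 : ∀ ξ : Fin d → F, ξ ≠ 0 →
      ‖ftF χ V ξ‖ ≤ c3 * (Fintype.card F : ℝ) ^ (-(((d : ℝ) + 1) / 2)))
    (hE2 : (Fintype.card F : ℝ) ^ (d - 1) ≤ (Nat.card E : ℝ) ^ 2)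
    (j : ℕ) :
    (energy (j + 2) E : ℝ) ≤ (4 * c3 ^ 2 + 2 * c2 + 1) ^ j *
      ((Fintype.card F : ℝ) ^ ((d - 1) * j) * (energy 2 E : ℝ)
        + (Nat.card E : ℝ) ^ (2 * j + 3) / (Fintype.card F : ℝ)) := by
  set q : ℝ := (Fintype.card F : ℝ) with hqdef
  have hq : 0 < q := by positivity
  set K : ℝ := 4 * c3 ^ 2 + 2 * c2 + 1 with hK
  have hK1 : 1 ≤ K := by
    have h0 : 0 ≤ 4 * c3 ^ 2 + 2 * c2 := by positivity
    rw [hK]; linarith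
  set L2 : ℝ := (energy 2 E : ℝ) with hL2
  have hL2nn : 0 ≤ L2 := by positivity
  set Ec : ℝ := (Nat.card E : ℝ) with hEc
  have hEcnn : 0 ≤ Ec := by positivity
  induction j with
  | zero =>
    have h1 : (0:ℝ) ≤ Ec ^ (2 * 0 + 3) / q := by positivity
    simp only [pow_zero, one_mul, Nat.mul_zero]
    linarith
  | succ j ih =>
    have hKj : (1:ℝ) ≤ K ^ j := by
      have := pow_le_pow_left₀ (zero_le_one) hK1 j
      simpa using this
    have hstep := step_ineq χ hχ E V hEV hc2 hc3 hd hV2 hV3 (j + 2)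
    have hx1 : 2 * (j + 2) + 1 = 2 * (j + 1) + 3 := by omega
    rw [hx1] at hstep
    have e1 : q ^ ((d-1) * (j+1)) = q ^ ((d-1) * j) * q ^ (d-1) := by
      rw [show (d-1) * (j+1) = (d-1) * j + (d-1) from by ring, pow_add]
    have e2 : Ec ^ (2 * (j+1) + 3) = Ec ^ 2 * Ec ^ (2 * j + 3) := by
      rw [show 2 * (j+1) + 3 = 2 + (2 * j + 3) from by ring, pow_add]
    have key : q ^ (d-1) * (Ec ^ (2*j+3) / q) ≤ Ec ^ (2*(j+1)+3) / q := by
      rw [e2]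
      have h5 : q ^ (d-1) * Ec ^ (2*j+3) ≤ Ec ^ 2 * Ec ^ (2*j+3) :=
        mul_le_mul_of_nonneg_right hE2 (by positivity)
      calc q ^ (d-1) * (Ec ^ (2*j+3) / q) = (q ^ (d-1) * Ec ^ (2*j+3)) / q := by ring
        _ ≤ (Ec ^ 2 * Ec ^ (2*j+3)) / q := (div_le_div_iff_of_pos_right hq).mpr h5
    have hterm : (energy ((j+1) + 2) E : ℝ)
        ≤ 2 * c2 * Ec ^ (2*(j+1)+3) / q + 4 * c3 ^ 2 * q ^ (d-1) * (energy (j+2) E : ℝ) := by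
      have hidx : (j+1) + 2 = (j+2) + 1 := by omega
      rw [hidx]
      exact hstep
    have hih : 4 * c3 ^ 2 * q ^ (d-1) * (energy (j+2) E : ℝ)
        ≤ 4 * c3 ^ 2 * q ^ (d-1) * (K ^ j * (q ^ ((d-1)*j) * L2 + Ec ^ (2*j+3) / q)) :=
      mul_le_mul_of_nonneg_left ih (by positivity)
    have hXq : (0:ℝ) ≤ Ec ^ (2*(j+1)+3) / q := by positivity
    have hZ : (0:ℝ) ≤ q ^ ((d-1)*(j+1)) * L2 := by positivity
    have expand : 4 * c3 ^ 2 * q ^ (d-1) * (K ^ j * (q ^ ((d-1)*j) * L2 + Ec ^ (2*j+3) / q))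
        = 4 * c3 ^ 2 * K ^ j * (q ^ ((d-1)*(j+1)) * L2)
          + 4 * c3 ^ 2 * K ^ j * (q ^ (d-1) * (Ec ^ (2*j+3) / q)) := by
      rw [e1]; ring
    have hfin : 2 * c2 * Ec ^ (2*(j+1)+3) / q
          + 4 * c3 ^ 2 * K ^ j * (q ^ ((d-1)*(j+1)) * L2)
          + 4 * c3 ^ 2 * K ^ j * (q ^ (d-1) * (Ec ^ (2*j+3) / q))
        ≤ K ^ (j+1) * (q ^ ((d-1)*(j+1)) * L2 + Ec ^ (2*(j+1)+3) / q) := by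
      have hKsucc : K ^ (j+1) = K * K ^ j := (pow_succ K j).trans (mul_comm _ _)
      have t1 : 4 * c3 ^ 2 * K ^ j * (q ^ ((d-1)*(j+1)) * L2)
          ≤ K ^ (j+1) * (q ^ ((d-1)*(j+1)) * L2) := by
        rw [hKsucc]
        have h6 : 4 * c3 ^ 2 * K ^ j ≤ K * K ^ j := by
          rw [hK]; exact coef_bound2 hc2 (by positivity)
        exact mul_le_mul_of_nonneg_right h6 hZ
      have t2 : 2 * c2 * Ec ^ (2*(j+1)+3) / q
            + 4 * c3 ^ 2 * K ^ j * (q ^ (d-1) * (Ec ^ (2*j+3) / q))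
          ≤ K ^ (j+1) * (Ec ^ (2*(j+1)+3) / q) := by
        have u1 : 4 * c3 ^ 2 * K ^ j * (q ^ (d-1) * (Ec ^ (2*j+3) / q))
            ≤ 4 * c3 ^ 2 * K ^ j * (Ec ^ (2*(j+1)+3) / q) :=
          mul_le_mul_of_nonneg_left key (by positivity)
        have u2 : 2 * c2 * Ec ^ (2*(j+1)+3) / q
            = 2 * c2 * (Ec ^ (2*(j+1)+3) / q) := by ring
        have u3 : 2 * c2 * (Ec ^ (2*(j+1)+3) / q)
              + 4 * c3 ^ 2 * K ^ j * (Ec ^ (2*(j+1)+3) / q)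
            ≤ K * K ^ j * (Ec ^ (2*(j+1)+3) / q) := by
          have hcoef : 2 * c2 + 4 * c3 ^ 2 * K ^ j ≤ K * K ^ j := by
            rw [hK]; exact coef_bound hc2 hKj
          calc 2 * c2 * (Ec ^ (2*(j+1)+3) / q) + 4 * c3 ^ 2 * K ^ j * (Ec ^ (2*(j+1)+3) / q)
              = (2 * c2 + 4 * c3 ^ 2 * K ^ j) * (Ec ^ (2*(j+1)+3) / q) := by ring
            _ ≤ K * K ^ j * (Ec ^ (2*(j+1)+3) / q) := mul_le_mul_of_nonneg_right hcoef hXq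
        rw [hKsucc]
        linarith
      linarith
    calc (energy ((j+1) + 2) E : ℝ)
        ≤ 2 * c2 * Ec ^ (2*(j+1)+3) / q + 4 * c3 ^ 2 * q ^ (d-1) * (energy (j+2) E : ℝ) := hterm
      _ ≤ 2 * c2 * Ec ^ (2*(j+1)+3) / q
          + (4 * c3 ^ 2 * K ^ j * (q ^ ((d-1)*(j+1)) * L2)
            + 4 * c3 ^ 2 * K ^ j * (q ^ (d-1) * (Ec ^ (2*j+3) / q))) := by
          rw [← expand]; linarith
      _ ≤ K ^ (j+1) * (q ^ ((d-1)*(j+1)) * L2 + Ec ^ (2*(j+1)+3) / q) := by linarith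
end Aux5

/-- for `d ≥ 2`, even `k ≥ 6` and `c₁, c₂, c₃ > 0` there is `C > 0` such that
for every odd prime power `q`, every `(c₁,c₂,c₃)`-regular `V ⊆ 𝔽_q^d` and every `E ⊆ V` with
`|E| > q^{(d-1)/2}`, one has `Λ_k(E) ≤ C (q^{(d-1)(k-4)/2} Λ_4(E) + q^{-1} |E|^{k-1})`. -/
theorem stmt_15 (d k : ℕ) (hd : 2 ≤ d) (hk : 6 ≤ k) (hke : Even k)
    (c1 c2 c3 : ℝ) (hc1 : 0 < c1) (hc2 : 0 < c2) (hc3 : 0 < c3) :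
    ∃ C : ℝ, 0 < C ∧
      ∀ (F : Type) [Field F] [Fintype F], Odd (Fintype.card F) →
        ∀ χ : AddChar F ℂ, χ ≠ 1 →
          ∀ V : Set (Fin d → F), IsRegularVariety c1 c2 c3 χ V →
            ∀ E : Set (Fin d → F), E ⊆ V →
              (Fintype.card F : ℝ) ^ (((d : ℝ) - 1) / 2) < (Nat.card E : ℝ) →
              (energy (k / 2) E : ℝ) ≤
                C * ((Fintype.card F : ℝ) ^ ((d - 1) * (k - 4) / 2) * (energy 2 E : ℝ) +
                  (Nat.card E : ℝ) ^ (k - 1) / (Fintype.card F : ℝ)) := by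

  set K : ℝ := 4 * c3 ^ 2 + 2 * c2 + 1 with hK
  have hK1 : (1:ℝ) ≤ K := by
    have h0 : 0 ≤ 4 * c3 ^ 2 + 2 * c2 := by positivity
    rw [hK]; linarith
  refine ⟨K ^ k, by positivity, ?_⟩
  intro F _ _ _hodd χ hχ V hV E hEV hlow
  classical
  obtain ⟨m', hm'⟩ := hke
  have hm3 : 3 ≤ m' := by omega
  set j : ℕ := m' - 2 with hj
  have hkj : k = (j + 2) + (j + 2) := by omega
  obtain ⟨hV1, hV2, hV3⟩ := hV
  set q : ℝ := (Fintype.card F : ℝ) with hqdef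
  have hq : 0 < q := by positivity
  -- |E|^2 ≥ q^(d-1)
  have hE2 : q ^ (d - 1) ≤ (Nat.card E : ℝ) ^ 2 := by
    have h1 : (0:ℝ) ≤ q ^ (((d:ℝ) - 1) / 2) := by positivity
    have h2 : (q ^ (((d:ℝ) - 1) / 2)) ^ 2 ≤ (Nat.card E : ℝ) ^ 2 :=
      pow_le_pow_left₀ h1 hlow.le 2
    have h3 : (q ^ (((d:ℝ) - 1) / 2)) ^ 2 = q ^ (d - 1) := by
      rw [← Real.rpow_natCast (q ^ (((d:ℝ) - 1) / 2)) 2, ← Real.rpow_mul hq.le]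
      rw [← Real.rpow_natCast q (d - 1), Nat.cast_sub (by omega : 1 ≤ d)]
      norm_num
    linarith [h3 ▸ h2]
  have hest := main_est χ hχ E V hEV hc2.le hc3.le (by omega : 1 ≤ d) hV2 hV3 hE2 j
  -- exponent bookkeeping
  have hk2 : k / 2 = j + 2 := by omega
  have hk4 : (d - 1) * (k - 4) / 2 = (d - 1) * j := by
    have h4 : k - 4 = 2 * j := by omega
    rw [h4, show (d - 1) * (2 * j) = ((d - 1) * j) * 2 from by ring,
      Nat.mul_div_cancel _ (by norm_num)]
  have hk1 : k - 1 = 2 * j + 3 := by omega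
  rw [hk2, hk4, hk1]
  have hS : (0:ℝ) ≤ q ^ ((d - 1) * j) * (energy 2 E : ℝ)
      + (Nat.card E : ℝ) ^ (2 * j + 3) / q := by positivity
  have hKjk : K ^ j ≤ K ^ k := pow_le_pow_right₀ hK1 (by omega)
  calc (energy (j + 2) E : ℝ)
      ≤ K ^ j * (q ^ ((d - 1) * j) * (energy 2 E : ℝ)
          + (Nat.card E : ℝ) ^ (2 * j + 3) / q) := hest
    _ ≤ K ^ k * (q ^ ((d - 1) * j) * (energy 2 E : ℝ)
          + (Nat.card E : ℝ) ^ (2 * j + 3) / q) := mul_le_mul_of_nonneg_right hKjk hS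
end
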